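/- For $s > -1/2$, the bilinear operator $B_2$ defined by $B_2(u,v)_k = \sum_{k_1+k_2=k,\, k_1,k_2 \neq 0} \frac{e^{i3kk_1k_2 t}}{k_1 k_2} u_{k_1} v_{k_2}$ for $k \in \mathbb{Z}\setminus\{0\}$ satisfies $\|B_2(u,v)\|_{\dot H^{s+1}} \leq c_2(s+1) \|u\|_{\dot H^s} \|v\|_{\dot H^s}$ for a constant $c_2(s+1)$ depending only on $s$. -/

import Mathlib

open Complex

open scoped ENNReal
open MeasureTheory

noncomputable def hnorm (s : ℝ) (u : ℤ → ℂ) : ℝ :=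
  (∑' k : ℤ, |(k : ℝ)| ^ (2 * s) * ‖u k‖ ^ 2) ^ ((1 : ℝ) / 2)

/-- The bilinear operator `B₂` of the KdV equation. -/
noncomputable def B2 (t : ℝ) (u v : ℤ → ℂ) (k : ℤ) : ℂ :=
  ∑' k1 : ℤ, Complex.exp (Complex.I * (3 * (k : ℂ) * (k1 : ℂ) * ((k : ℂ) - (k1 : ℂ)) * (t : ℂ)))
      / ((k1 : ℂ) * ((k : ℂ) - (k1 : ℂ))) * u k1 * v (k - k1)

namespace B2Aux

lemma tsum_cs (f g : ℤ → ℝ≥0∞) :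
    ∑' k, f k * g k ≤ (∑' k, f k ^ 2) ^ ((1:ℝ)/2) * (∑' k, g k ^ 2) ^ ((1:ℝ)/2) := by
  have hconj : Real.HolderConjugate 2 2 := Real.HolderConjugate.two_two
  have h := ENNReal.lintegral_mul_le_Lp_mul_Lq (Measure.count : Measure ℤ) hconj
    (f := f) (g := g) (measurable_of_countable f).aemeasurable
    (measurable_of_countable g).aemeasurable
  rw [lintegral_count, lintegral_count, lintegral_count] at h
  have h2 : ∀ x : ℝ≥0∞, x ^ (2:ℝ) = x ^ 2 := fun x => by
    rw [← ENNReal.rpow_natCast x 2]; norm_num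
  simp only [Pi.mul_apply, h2] at h
  convert h using 3

lemma sq_half (y : ℝ≥0∞) : (y ^ ((1:ℝ)/2)) ^ 2 = y := by
  rw [← ENNReal.rpow_natCast (y ^ ((1:ℝ)/2)) 2, ← ENNReal.rpow_mul]
  norm_num

lemma tsum_cs' (f g : ℤ → ℝ≥0∞) :
    (∑' k, f k * g k) ^ 2 ≤ (∑' k, f k ^ 2) * (∑' k, g k ^ 2) := by
  calc (∑' k, f k * g k) ^ 2
      ≤ ((∑' k, f k ^ 2) ^ ((1:ℝ)/2) * (∑' k, g k ^ 2) ^ ((1:ℝ)/2)) ^ 2 :=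
        pow_le_pow_left' (tsum_cs f g) 2
    _ = (∑' k, f k ^ 2) * (∑' k, g k ^ 2) := by rw [mul_pow, sq_half, sq_half]

lemma tsum_young (a c : ℤ → ℝ≥0∞) :
    ∑' k, (∑' j, a j * c (k - j)) ^ 2 ≤ (∑' j, a j ^ 2) * (∑' j, c j) ^ 2 := by
  have key : ∀ k : ℤ, (∑' j, a j * c (k - j)) ^ 2
      ≤ (∑' j, a j ^ 2 * c (k - j)) * (∑' j, c j) := by
    intro k
    have h1 : ∀ j : ℤ, a j * c (k - j)
        = (a j * (c (k - j)) ^ ((1:ℝ)/2)) * (c (k - j)) ^ ((1:ℝ)/2) := by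
      intro j; rw [mul_assoc, ← sq, sq_half]
    calc (∑' j, a j * c (k - j)) ^ 2
        = (∑' j, (a j * (c (k - j)) ^ ((1:ℝ)/2)) * (c (k - j)) ^ ((1:ℝ)/2)) ^ 2 := by
          simp_rw [h1]
      _ ≤ (∑' j, (a j * (c (k - j)) ^ ((1:ℝ)/2)) ^ 2) * (∑' j, ((c (k - j)) ^ ((1:ℝ)/2)) ^ 2) :=
          tsum_cs' _ _
      _ = (∑' j, a j ^ 2 * c (k - j)) * (∑' j, c (k - j)) := by
          simp_rw [mul_pow, sq_half]
      _ = (∑' j, a j ^ 2 * c (k - j)) * (∑' j, c j) := by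
          congr 1
          exact (Equiv.subLeft k).tsum_eq c
  calc ∑' k, (∑' j, a j * c (k - j)) ^ 2
      ≤ ∑' k, (∑' j, a j ^ 2 * c (k - j)) * (∑' j, c j) := ENNReal.tsum_le_tsum key
    _ = (∑' k, ∑' j, a j ^ 2 * c (k - j)) * (∑' j, c j) := by rw [ENNReal.tsum_mul_right]
    _ = (∑' j, ∑' k, a j ^ 2 * c (k - j)) * (∑' j, c j) := by rw [ENNReal.tsum_comm]
    _ = (∑' j, a j ^ 2 * (∑' j, c j)) * (∑' j, c j) := by
        congr 1; refine tsum_congr fun j => ?_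
        rw [ENNReal.tsum_mul_left]
        congr 1
        exact (Equiv.subRight j).tsum_eq c
    _ = (∑' j, a j ^ 2) * (∑' j, c j) ^ 2 := by
        rw [ENNReal.tsum_mul_right, sq]; ring

noncomputable def W (r : ℝ) (k : ℤ) : ℝ≥0∞ := ENNReal.ofReal (|(k:ℝ)| ^ r)

lemma W_mul {k : ℤ} (hk : k ≠ 0) (r r' : ℝ) : W r k * W r' k = W (r + r') k := by
  have h : (0:ℝ) < |(k:ℝ)| := abs_pos.mpr (Int.cast_ne_zero.mpr hk)
  rw [W, W, W, ← ENNReal.ofReal_mul (Real.rpow_nonneg (abs_nonneg _) _),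
    ← Real.rpow_add h]

lemma W_sq (r : ℝ) (k : ℤ) : W r k ^ 2 = W (2 * r) k := by
  rw [W, W, ← ENNReal.ofReal_pow (Real.rpow_nonneg (abs_nonneg _) _),
    ← Real.rpow_natCast (|(k:ℝ)| ^ r) 2, ← Real.rpow_mul (abs_nonneg _)]
  norm_num [mul_comm]

lemma weight_real {r : ℝ} (hr : 0 ≤ r) (x y : ℝ) :
    |x + y| ^ r ≤ 2 ^ r * (|x| ^ r + |y| ^ r) := by
  have h1 : |x + y| ≤ 2 * max |x| |y| := by
    calc |x + y| ≤ |x| + |y| := abs_add_le x y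
      _ ≤ max |x| |y| + max |x| |y| := add_le_add (le_max_left _ _) (le_max_right _ _)
      _ = 2 * max |x| |y| := by ring
  calc |x + y| ^ r ≤ (2 * max |x| |y|) ^ r :=
        Real.rpow_le_rpow (abs_nonneg _) h1 hr
    _ = 2 ^ r * max |x| |y| ^ r := Real.mul_rpow (by norm_num) (le_max_of_le_left (abs_nonneg _))
    _ ≤ 2 ^ r * (|x| ^ r + |y| ^ r) := by
        gcongr
        rcases max_cases |x| |y| with ⟨h, _⟩ | ⟨h, _⟩ <;> rw [h]
        · exact le_add_of_nonneg_right (Real.rpow_nonneg (abs_nonneg _) _)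
        · exact le_add_of_nonneg_left (Real.rpow_nonneg (abs_nonneg _) _)

lemma weight_W {r : ℝ} (hr : 0 ≤ r) (k1 k2 : ℤ) :
    W r (k1 + k2) ≤ ENNReal.ofReal (2 ^ r) * (W r k1 + W r k2) := by
  rw [W, W, W, ← ENNReal.ofReal_add (Real.rpow_nonneg (abs_nonneg _) _)
    (Real.rpow_nonneg (abs_nonneg _) _),
    ← ENNReal.ofReal_mul (Real.rpow_nonneg (by norm_num) _)]
  apply ENNReal.ofReal_le_ofReal
  have := weight_real hr ((k1:ℝ)) ((k2:ℝ))
  simpa using this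

lemma norm_term (t : ℝ) (u v : ℤ → ℂ) (k k1 : ℤ) :
    ‖Complex.exp (Complex.I * (3 * (k : ℂ) * (k1 : ℂ) * ((k : ℂ) - (k1 : ℂ)) * (t : ℂ)))
      / ((k1 : ℂ) * ((k : ℂ) - (k1 : ℂ))) * u k1 * v (k - k1)‖
    = |(k1:ℝ)|⁻¹ * |((k - k1 : ℤ):ℝ)|⁻¹ * ‖u k1‖ * ‖v (k - k1)‖ := by
  have hz : (3 * (k : ℂ) * (k1 : ℂ) * ((k : ℂ) - (k1 : ℂ)) * (t : ℂ))
      = ((3 * (k:ℝ) * (k1:ℝ) * ((k:ℝ) - (k1:ℝ)) * t : ℝ) : ℂ) := by push_cast; ring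
  have hexp : ‖Complex.exp (Complex.I *
      (3 * (k : ℂ) * (k1 : ℂ) * ((k : ℂ) - (k1 : ℂ)) * (t : ℂ)))‖ = 1 := by
    rw [hz, mul_comm, Complex.norm_exp_ofReal_mul_I]
  have hk1 : ‖((k1:ℤ) : ℂ)‖ = |(k1:ℝ)| := by
    rw [show ((k1:ℤ) : ℂ) = (((k1:ℤ):ℝ) : ℂ) by push_cast; ring, Complex.norm_real,
      Real.norm_eq_abs]
  have hk2 : ‖((k : ℂ) - (k1 : ℂ))‖ = |((k - k1 : ℤ):ℝ)| := by
    rw [show ((k : ℂ) - (k1 : ℂ)) = (((k - k1 : ℤ):ℝ) : ℂ) by push_cast; ring,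
      Complex.norm_real, Real.norm_eq_abs]
  rw [norm_mul, norm_mul, norm_div, hexp, norm_mul, hk1, hk2]
  field_simp

lemma ofReal_norm_term (t : ℝ) (u v : ℤ → ℂ) (k k1 : ℤ) :
    ENNReal.ofReal
      ‖Complex.exp (Complex.I * (3 * (k : ℂ) * (k1 : ℂ) * ((k : ℂ) - (k1 : ℂ)) * (t : ℂ)))
      / ((k1 : ℂ) * ((k : ℂ) - (k1 : ℂ))) * u k1 * v (k - k1)‖
    = W (-1) k1 * W (-1) (k - k1) * ENNReal.ofReal ‖u k1‖ * ENNReal.ofReal ‖v (k - k1)‖ := by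
  rw [norm_term, ENNReal.ofReal_mul (by positivity), ENNReal.ofReal_mul (by positivity),
    ENNReal.ofReal_mul (by positivity)]
  congr 3 <;> rw [W, Real.rpow_neg_one]

lemma enorm_B2_le (t : ℝ) (u v : ℤ → ℂ) (k : ℤ) :
    ENNReal.ofReal ‖B2 t u v k‖
      ≤ ∑' k1, W (-1) k1 * W (-1) (k - k1) * ENNReal.ofReal ‖u k1‖ *
          ENNReal.ofReal ‖v (k - k1)‖ := by
  by_cases h : Summable fun k1 : ℤ =>
      Complex.exp (Complex.I * (3 * (k : ℂ) * (k1 : ℂ) * ((k : ℂ) - (k1 : ℂ)) * (t : ℂ)))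
      / ((k1 : ℂ) * ((k : ℂ) - (k1 : ℂ))) * u k1 * v (k - k1)
  · have hn : Summable fun k1 : ℤ =>
        ‖Complex.exp (Complex.I * (3 * (k : ℂ) * (k1 : ℂ) * ((k : ℂ) - (k1 : ℂ)) * (t : ℂ)))
        / ((k1 : ℂ) * ((k : ℂ) - (k1 : ℂ))) * u k1 * v (k - k1)‖ := summable_norm_iff.mpr h
    calc ENNReal.ofReal ‖B2 t u v k‖
        ≤ ENNReal.ofReal (∑' k1 : ℤ,
          ‖Complex.exp (Complex.I * (3 * (k : ℂ) * (k1 : ℂ) * ((k : ℂ) - (k1 : ℂ)) * (t : ℂ)))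
          / ((k1 : ℂ) * ((k : ℂ) - (k1 : ℂ))) * u k1 * v (k - k1)‖) :=
          ENNReal.ofReal_le_ofReal (norm_tsum_le_tsum_norm hn)
      _ = ∑' k1 : ℤ, ENNReal.ofReal
          ‖Complex.exp (Complex.I * (3 * (k : ℂ) * (k1 : ℂ) * ((k : ℂ) - (k1 : ℂ)) * (t : ℂ)))
          / ((k1 : ℂ) * ((k : ℂ) - (k1 : ℂ))) * u k1 * v (k - k1)‖ :=
          ENNReal.ofReal_tsum_of_nonneg (fun _ => norm_nonneg _) hn
      _ = _ := by simp_rw [ofReal_norm_term]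
  · rw [B2, tsum_eq_zero_of_not_summable h]
    simp

lemma Epoint (s : ℝ) (hs : 0 < s + 1) (u v : ℤ → ℂ) (hu0 : u 0 = 0) (hv0 : v 0 = 0)
    (k k1 : ℤ) :
    W (s+1) k * (W (-1) k1 * W (-1) (k - k1) * ENNReal.ofReal ‖u k1‖ *
        ENNReal.ofReal ‖v (k - k1)‖)
    ≤ ENNReal.ofReal (2 ^ (s+1)) *
      ((W s k1 * ENNReal.ofReal ‖u k1‖) *
          (W s (k-k1) * ENNReal.ofReal ‖v (k-k1)‖ * W (-(s+1)) (k-k1))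
        + (W s k1 * ENNReal.ofReal ‖u k1‖ * W (-(s+1)) k1) *
          (W s (k-k1) * ENNReal.ofReal ‖v (k-k1)‖)) := by
  by_cases h1 : k1 = 0
  · simp [h1, hu0]
  by_cases h2 : k - k1 = 0
  · simp [h2, hv0]
  have e1 : W (-1) k1 = W s k1 * W (-(s+1)) k1 := by
    rw [W_mul h1]; congr 1; ring
  have e2 : W (-1) (k - k1) = W s (k-k1) * W (-(s+1)) (k-k1) := by
    rw [W_mul h2]; congr 1; ring
  have z1 : W (s+1) k1 * W (-(s+1)) k1 = 1 := by
    rw [W_mul h1, show (s+1) + -(s+1) = 0 by ring, W]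
    simp [Real.rpow_zero]
  have z2 : W (s+1) (k-k1) * W (-(s+1)) (k-k1) = 1 := by
    rw [W_mul h2, show (s+1) + -(s+1) = 0 by ring, W]
    simp [Real.rpow_zero]
  have hw : W (s+1) k ≤ ENNReal.ofReal (2 ^ (s+1)) * (W (s+1) k1 + W (s+1) (k - k1)) := by
    have := weight_W (le_of_lt hs) k1 (k - k1)
    simpa using this
  rw [e1, e2]
  calc W (s+1) k * (W s k1 * W (-(s+1)) k1 * (W s (k-k1) * W (-(s+1)) (k-k1)) *
        ENNReal.ofReal ‖u k1‖ * ENNReal.ofReal ‖v (k - k1)‖)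
      ≤ (ENNReal.ofReal (2 ^ (s+1)) * (W (s+1) k1 + W (s+1) (k - k1))) *
        (W s k1 * W (-(s+1)) k1 * (W s (k-k1) * W (-(s+1)) (k-k1)) *
        ENNReal.ofReal ‖u k1‖ * ENNReal.ofReal ‖v (k - k1)‖) := by gcongr
    _ = ENNReal.ofReal (2 ^ (s+1)) *
        ((W (s+1) k1 * W (-(s+1)) k1) *
            (W s k1 * ENNReal.ofReal ‖u k1‖ *
              (W s (k-k1) * ENNReal.ofReal ‖v (k-k1)‖ * W (-(s+1)) (k-k1)))
          + (W (s+1) (k-k1) * W (-(s+1)) (k-k1)) *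
            (W s k1 * ENNReal.ofReal ‖u k1‖ * W (-(s+1)) k1 *
              (W s (k-k1) * ENNReal.ofReal ‖v (k-k1)‖))) := by
        ring
    _ = _ := by rw [z1, z2]; ring_nf

lemma tsum_conv_comm (f g : ℤ → ℝ≥0∞) (k : ℤ) :
    ∑' j, f j * g (k - j) = ∑' j, g j * f (k - j) := by
  rw [← (Equiv.subLeft k).tsum_eq (fun j => g j * f (k - j))]
  refine tsum_congr fun j => ?_
  simp only [Equiv.subLeft_apply, sub_sub_cancel]
  ring

lemma sq_add_le (g h : ℝ≥0∞) : (g + h) ^ 2 ≤ 4 * (g ^ 2 + h ^ 2) := by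
  rcases le_total g h with hle | hle
  · calc (g + h) ^ 2 ≤ (h + h) ^ 2 := by gcongr
      _ = 4 * h ^ 2 := by ring
      _ ≤ 4 * (g ^ 2 + h ^ 2) := by
          gcongr; exact le_add_self
  · calc (g + h) ^ 2 ≤ (g + g) ^ 2 := by gcongr
      _ = 4 * g ^ 2 := by ring
      _ ≤ 4 * (g ^ 2 + h ^ 2) := by
          gcongr; exact le_self_add

end B2Aux

open B2Aux in
theorem B2_bound (s : ℝ) (hs : -(1 / 2) < s) :
    ∃ C : ℝ, ∀ (t : ℝ) (u v : ℤ → ℂ), u 0 = 0 → v 0 = 0 →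
      (Summable fun k : ℤ => |(k : ℝ)| ^ (2 * s) * ‖u k‖ ^ 2) →
      (Summable fun k : ℤ => |(k : ℝ)| ^ (2 * s) * ‖v k‖ ^ 2) →
      hnorm (s + 1) (B2 t u v) ≤ C * hnorm s u * hnorm s v := by
  have hs1 : 0 < s + 1 := by linarith
  have hMs : Summable fun k : ℤ => |(k:ℝ)| ^ (-(2 * (s+1))) :=
    Real.summable_abs_int_rpow (by linarith)
  set Msum : ℝ := ∑' k : ℤ, |(k:ℝ)| ^ (-(2 * (s+1))) with hMsum
  have hMnonneg : 0 ≤ Msum := tsum_nonneg fun k => Real.rpow_nonneg (abs_nonneg _) _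
  set D : ℝ := (2 ^ (s+1)) ^ 2 * 8 * Msum with hD
  have hDnonneg : 0 ≤ D := by positivity
  refine ⟨D ^ ((1:ℝ)/2), ?_⟩
  intro t u v hu0 hv0 hu hv
  set A : ℤ → ℝ≥0∞ := fun k => W s k * ENNReal.ofReal ‖u k‖ with hA
  set Bv : ℤ → ℝ≥0∞ := fun k => W s k * ENNReal.ofReal ‖v k‖ with hBv
  set m : ℤ → ℝ≥0∞ := fun k => W (-(s+1)) k with hm
  set c : ℝ≥0∞ := ENNReal.ofReal (2 ^ (s+1)) with hc
  set G : ℤ → ℝ≥0∞ := fun k => ∑' j, A j * (Bv (k - j) * m (k - j)) with hG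
  set H : ℤ → ℝ≥0∞ := fun k => ∑' j, (A j * m j) * Bv (k - j) with hH
  -- pointwise estimate E3
  have E3 : ∀ k : ℤ, W (s+1) k * ENNReal.ofReal ‖B2 t u v k‖ ≤ c * (G k + H k) := by
    intro k
    calc W (s+1) k * ENNReal.ofReal ‖B2 t u v k‖
        ≤ W (s+1) k * ∑' k1, W (-1) k1 * W (-1) (k - k1) * ENNReal.ofReal ‖u k1‖ *
            ENNReal.ofReal ‖v (k - k1)‖ := mul_le_mul_right (enorm_B2_le t u v k) _
      _ = ∑' k1, W (s+1) k * (W (-1) k1 * W (-1) (k - k1) * ENNReal.ofReal ‖u k1‖ *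
            ENNReal.ofReal ‖v (k - k1)‖) := ENNReal.tsum_mul_left.symm
      _ ≤ ∑' k1, c * ((A k1) * (Bv (k - k1) * m (k - k1)) + (A k1 * m k1) * Bv (k - k1)) := by
          refine ENNReal.tsum_le_tsum fun k1 => ?_
          have := Epoint s hs1 u v hu0 hv0 k k1
          calc W (s+1) k * (W (-1) k1 * W (-1) (k - k1) * ENNReal.ofReal ‖u k1‖ *
              ENNReal.ofReal ‖v (k - k1)‖) ≤ _ := this
            _ = c * ((A k1) * (Bv (k - k1) * m (k - k1)) + (A k1 * m k1) * Bv (k - k1)) := by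
              simp only [hA, hBv, hm, hc]
      _ = c * (G k + H k) := by rw [ENNReal.tsum_mul_left, ENNReal.tsum_add]
  -- squared pointwise estimate
  have E4 : ∀ k : ℤ, (W (s+1) k * ENNReal.ofReal ‖B2 t u v k‖) ^ 2
      ≤ c ^ 2 * 4 * (G k ^ 2 + H k ^ 2) := by
    intro k
    calc (W (s+1) k * ENNReal.ofReal ‖B2 t u v k‖) ^ 2
        ≤ (c * (G k + H k)) ^ 2 := pow_le_pow_left' (E3 k) 2
      _ = c ^ 2 * (G k + H k) ^ 2 := by ring
      _ ≤ c ^ 2 * (4 * (G k ^ 2 + H k ^ 2)) := by gcongr; exact sq_add_le _ _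
      _ = c ^ 2 * 4 * (G k ^ 2 + H k ^ 2) := by ring
  -- sum the squares
  set U2 : ℝ≥0∞ := ∑' k, A k ^ 2 with hU2
  set V2 : ℝ≥0∞ := ∑' k, Bv k ^ 2 with hV2
  set M2 : ℝ≥0∞ := ∑' k, m k ^ 2 with hM2
  have hGsum : ∑' k, G k ^ 2 ≤ U2 * (V2 * M2) := by
    calc ∑' k, G k ^ 2 ≤ (∑' j, A j ^ 2) * (∑' j, Bv j * m j) ^ 2 :=
          tsum_young A fun j => Bv j * m j
      _ ≤ U2 * (V2 * M2) := by
          rw [hU2]; gcongr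
          exact tsum_cs' Bv m
  have hHrw : ∀ k : ℤ, H k = ∑' j, Bv j * (A (k - j) * m (k - j)) := fun k => by
    have := tsum_conv_comm (fun j => A j * m j) Bv k
    simpa [hH] using this
  have hHsum : ∑' k, H k ^ 2 ≤ V2 * (U2 * M2) := by
    simp_rw [hHrw]
    calc ∑' k, (∑' j, Bv j * (A (k - j) * m (k - j))) ^ 2
        ≤ (∑' j, Bv j ^ 2) * (∑' j, A j * m j) ^ 2 :=
          tsum_young Bv fun j => A j * m j
      _ ≤ V2 * (U2 * M2) := by
          rw [hV2]; gcongr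
          exact tsum_cs' A m
  have Tle : ∑' k, (W (s+1) k * ENNReal.ofReal ‖B2 t u v k‖) ^ 2
      ≤ c ^ 2 * 8 * (U2 * V2 * M2) := by
    calc ∑' k, (W (s+1) k * ENNReal.ofReal ‖B2 t u v k‖) ^ 2
        ≤ ∑' k, c ^ 2 * 4 * (G k ^ 2 + H k ^ 2) := ENNReal.tsum_le_tsum E4
      _ = c ^ 2 * 4 * ((∑' k, G k ^ 2) + ∑' k, H k ^ 2) := by
          rw [ENNReal.tsum_mul_left, ENNReal.tsum_add]
      _ ≤ c ^ 2 * 4 * (U2 * (V2 * M2) + V2 * (U2 * M2)) := by gcongr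
      _ = c ^ 2 * 8 * (U2 * V2 * M2) := by ring
  -- identification of the ENNReal sums with the real ones
  have hA2 : ∀ k : ℤ, A k ^ 2 = ENNReal.ofReal (|(k:ℝ)| ^ (2 * s) * ‖u k‖ ^ 2) := by
    intro k
    rw [hA, mul_pow, W_sq, ENNReal.ofReal_mul (Real.rpow_nonneg (abs_nonneg _) _),
      ENNReal.ofReal_pow (norm_nonneg _), W]
  have hB2' : ∀ k : ℤ, Bv k ^ 2 = ENNReal.ofReal (|(k:ℝ)| ^ (2 * s) * ‖v k‖ ^ 2) := by
    intro k
    rw [hBv, mul_pow, W_sq, ENNReal.ofReal_mul (Real.rpow_nonneg (abs_nonneg _) _),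
      ENNReal.ofReal_pow (norm_nonneg _), W]
  have hm2 : ∀ k : ℤ, m k ^ 2 = ENNReal.ofReal (|(k:ℝ)| ^ (-(2 * (s+1)))) := by
    intro k
    rw [hm, W_sq, show 2 * -(s+1) = -(2*(s+1)) by ring, W]
  set Usum : ℝ := ∑' k : ℤ, |(k:ℝ)| ^ (2 * s) * ‖u k‖ ^ 2 with hUsum
  set Vsum : ℝ := ∑' k : ℤ, |(k:ℝ)| ^ (2 * s) * ‖v k‖ ^ 2 with hVsum
  have hUnonneg : 0 ≤ Usum := tsum_nonneg fun k => by positivity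
  have hVnonneg : 0 ≤ Vsum := tsum_nonneg fun k => by positivity
  have hU2eq : U2 = ENNReal.ofReal Usum := by
    rw [hU2, hUsum, ENNReal.ofReal_tsum_of_nonneg (fun k => by positivity) hu]
    exact tsum_congr hA2
  have hV2eq : V2 = ENNReal.ofReal Vsum := by
    rw [hV2, hVsum, ENNReal.ofReal_tsum_of_nonneg (fun k => by positivity) hv]
    exact tsum_congr hB2'
  have hM2eq : M2 = ENNReal.ofReal Msum := by
    rw [hM2, hMsum, ENNReal.ofReal_tsum_of_nonneg
      (fun k => Real.rpow_nonneg (abs_nonneg _) _) hMs]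
    exact tsum_congr hm2
  have hc2 : c ^ 2 = ENNReal.ofReal ((2 ^ (s+1)) ^ 2) := by
    rw [hc, ENNReal.ofReal_pow (by positivity)]
  have hKeq : c ^ 2 * 8 * (U2 * V2 * M2) = ENNReal.ofReal (D * Usum * Vsum) := by
    rw [hc2, hU2eq, hV2eq, hM2eq, hD]
    rw [show ((2:ℝ) ^ (s+1)) ^ 2 * 8 * Msum * Usum * Vsum
      = (2 ^ (s+1)) ^ 2 * 8 * (Usum * Vsum * Msum) by ring]
    rw [ENNReal.ofReal_mul (by positivity), ENNReal.ofReal_mul (by positivity),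
      ENNReal.ofReal_mul (by positivity), ENNReal.ofReal_mul (by positivity)]
    norm_num
  -- relabel each ENNReal term as ofReal of the real term
  have hterm : ∀ k : ℤ, (W (s+1) k * ENNReal.ofReal ‖B2 t u v k‖) ^ 2
      = ENNReal.ofReal (|(k:ℝ)| ^ (2 * (s+1)) * ‖B2 t u v k‖ ^ 2) := by
    intro k
    rw [mul_pow, W_sq, ENNReal.ofReal_mul (Real.rpow_nonneg (abs_nonneg _) _),
      ENNReal.ofReal_pow (norm_nonneg _), W]
  set F : ℤ → ℝ := fun k => |(k:ℝ)| ^ (2 * (s+1)) * ‖B2 t u v k‖ ^ 2 with hF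
  have hFnonneg : ∀ k, 0 ≤ F k := fun k => by positivity
  have Tle' : ∑' k, ENNReal.ofReal (F k) ≤ ENNReal.ofReal (D * Usum * Vsum) := by
    have := Tle
    simp_rw [hterm] at this
    rw [hKeq] at this
    exact this
  have hFsummable : Summable F := by
    have hne : ∑' k, ENNReal.ofReal (F k) ≠ ⊤ :=
      ne_top_of_le_ne_top ENNReal.ofReal_ne_top Tle'
    have := ENNReal.summable_toReal hne
    refine this.congr fun k => ?_
    rw [ENNReal.toReal_ofReal (hFnonneg k)]
  have hFsum_le : ∑' k, F k ≤ D * Usum * Vsum := by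
    have h1 : ∑' k, F k = (∑' k, ENNReal.ofReal (F k)).toReal := by
      rw [ENNReal.tsum_toReal_eq fun k => ENNReal.ofReal_ne_top]
      exact tsum_congr fun k => (ENNReal.toReal_ofReal (hFnonneg k)).symm
    rw [h1]
    calc (∑' k, ENNReal.ofReal (F k)).toReal
        ≤ (ENNReal.ofReal (D * Usum * Vsum)).toReal :=
          ENNReal.toReal_mono ENNReal.ofReal_ne_top Tle'
      _ = D * Usum * Vsum := ENNReal.toReal_ofReal (by positivity)
  -- conclude
  rw [hnorm, hnorm, hnorm]
  have hfinal : (∑' k : ℤ, |(k:ℝ)| ^ (2 * (s+1)) * ‖B2 t u v k‖ ^ 2) ≤ D * Usum * Vsum := hFsum_le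
  calc (∑' k : ℤ, |(k:ℝ)| ^ (2 * (s+1)) * ‖B2 t u v k‖ ^ 2) ^ ((1:ℝ)/2)
      ≤ (D * Usum * Vsum) ^ ((1:ℝ)/2) := by
        apply Real.rpow_le_rpow (tsum_nonneg fun k => by positivity) hfinal (by norm_num)
    _ = D ^ ((1:ℝ)/2) * Usum ^ ((1:ℝ)/2) * Vsum ^ ((1:ℝ)/2) := by
        rw [Real.mul_rpow (by positivity) hVnonneg, Real.mul_rpow hDnonneg hUnonneg]
    _ = D ^ ((1:ℝ)/2) * hnorm s u * hnorm s v := by rw [hnorm, hnorm, hUsum, hVsum]
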